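/- For the linear functional φ on the Cartan part of the loop-Virasoro algebra defined by φ(d_0⊗t^k) = (−1)^k·k and φ(c⊗t^k) = 0 for all k ∈ ℤ, the polynomial P(t) = (t+1)² satisfies φ(d_0⊗t^k·P(t)) = 0 and φ(c⊗t^k·P(t)) = 0 for all k ∈ ℤ, but no polynomial of degree 1 with nonzero constant term, i.e., no P(t) = t − a with a ≠ 0, satisfies φ(d_0⊗t^k(t−a)) = 0 for all k. -/

import Mathlib

namespace GeneralizedEvaluationExample

open LaurentPolynomial

/-- The linear functional `φ` on the Cartan part, on the `d_0⊗t^k` components: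
`φ(d_0⊗t^k) = (−1)^k·k`, extended linearly to `φ(d_0⊗Q) = Σ q_n·(−1)^n·n`. -/
noncomputable def phiD (Q : LaurentPolynomial ℂ) : ℂ :=
  Finsupp.sum Q.coeff fun n c => c * ((-1 : ℂ) ^ n * (n : ℂ))

/-- The functional `φ` on the `c⊗t^k` components: `φ(c⊗t^k) = 0`, extended linearly. -/
noncomputable def phiC (Q : LaurentPolynomial ℂ) : ℂ :=
  Finsupp.sum Q.coeff fun _ _ => (0 : ℂ)

lemma phiD_add (p q : LaurentPolynomial ℂ) : phiD (p + q) = phiD p + phiD q := by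
  unfold phiD; rw [AddMonoidAlgebra.coeff_add]; exact Finsupp.sum_add_index' (fun _ => zero_mul _) (fun _ a b => add_mul a b _)

lemma phiD_single (n : ℤ) (c : ℂ) :
    phiD (AddMonoidAlgebra.single n c) = c * ((-1 : ℂ) ^ n * (n : ℂ)) := by
  unfold phiD; rw [AddMonoidAlgebra.coeff_single]; exact Finsupp.sum_single_index (zero_mul _)

lemma expand_sq (k : ℤ) :
    (T k : LaurentPolynomial ℂ) * ((T 1 : LaurentPolynomial ℂ) + 1) ^ 2
      = AddMonoidAlgebra.single (k+2) 1 + AddMonoidAlgebra.single (k+1) 2 + AddMonoidAlgebra.single k 1 := by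
  rw [single_eq_C_mul_T, single_eq_C_mul_T, single_eq_C_mul_T,
    show k + 2 = k + 1 + 1 by ring]
  simp only [T_add, map_one, map_ofNat]
  ring

lemma expand_lin (k : ℤ) (a : ℂ) :
    (T k : LaurentPolynomial ℂ) * ((T 1 : LaurentPolynomial ℂ) - C a)
      = AddMonoidAlgebra.single (k+1) 1 + AddMonoidAlgebra.single k (-a) := by
  rw [single_eq_C_mul_T, single_eq_C_mul_T]
  simp only [T_add, map_one, map_neg]
  ring

lemma neg_one_zpow_add (k m : ℤ) : (-1 : ℂ) ^ (k + m) = (-1 : ℂ) ^ k * (-1 : ℂ) ^ m :=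
  zpow_add₀ (by norm_num) k m

/-- For `φ(d_0⊗t^k) = (−1)^k·k` and `φ(c⊗t^k) = 0`, the polynomial `P(t) = (t+1)²`
satisfies `φ(d_0⊗t^k·P(t)) = 0` and `φ(c⊗t^k·P(t)) = 0` for all `k ∈ ℤ`, but no
degree-one polynomial `t − a` with nonzero constant term (`a ≠ 0`) satisfies
`φ(d_0⊗t^k(t−a)) = 0` for all `k`. -/
theorem generalized_evaluation_example :
    (∀ k : ℤ, phiD (T k * ((T 1 : LaurentPolynomial ℂ) + 1) ^ 2) = 0) ∧
    (∀ k : ℤ, phiC (T k * ((T 1 : LaurentPolynomial ℂ) + 1) ^ 2) = 0) ∧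
    (∀ a : ℂ, a ≠ 0 →
      ¬ (∀ k : ℤ, phiD (T k * ((T 1 : LaurentPolynomial ℂ) - C a)) = 0)) := by
  refine ⟨?_, ?_, ?_⟩
  · intro k
    rw [expand_sq, phiD_add, phiD_add, phiD_single, phiD_single, phiD_single,
      neg_one_zpow_add, neg_one_zpow_add]
    push_cast
    ring
  · intro k
    simp [phiC, Finsupp.sum]
  · intro a _ h
    have h0 := h 0
    rw [expand_lin, phiD_add, phiD_single, phiD_single] at h0
    norm_num at h0

end GeneralizedEvaluationExample
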